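/- Let A and B be m × n matrices over ℕ. Exactly one of the following holds: (1) there exists x ∈ ℕⁿ with every coordinate of x positive such that Ax ≤ Bx coordinate-wise; (2) there exists y ∈ ℕᵐ such that Aᵀy ≥ Bᵀy coordinate-wise and Aᵀy ≠ Bᵀy. -/

import Mathlib

open Finset

lemma aux_mul (a c X Y : ℚ) (ha : a ≠ 0) (hc : c ≠ 0) :
    a * c * (a⁻¹ * X + c⁻¹ * Y) = c * X + a * Y := by
  field_simp

lemma exists_between_finite {P N : Type*} [Fintype P] [Fintype N]
    (f : N → ℚ) (g : P → ℚ) (h : ∀ q p, f q ≤ g p) :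
    ∃ t, (∀ q, f q ≤ t) ∧ (∀ p, t ≤ g p) := by
  cases isEmpty_or_nonempty N with
  | inl hN =>
    cases isEmpty_or_nonempty P with
    | inl hP => exact ⟨0, fun q => (hN.false q).elim, fun p => (hP.false p).elim⟩
    | inr hP =>
      exact ⟨univ.inf' univ_nonempty g, fun q => (hN.false q).elim,
        fun p => inf'_le _ (mem_univ p)⟩
  | inr hN =>
    refine ⟨univ.sup' univ_nonempty f, fun q => le_sup' _ (mem_univ q), fun p => ?_⟩
    exact sup'_le _ _ fun q _ => h q p

theorem fm_alternative : ∀ (n : ℕ) (ι : Type) [Fintype ι] (A : ι → Fin n → ℚ) (b : ι → ℚ),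
    (∃ x : Fin n → ℚ, ∀ i, ∑ j, A i j * x j ≤ b i) ∨
    (∃ y : ι → ℚ, (∀ i, 0 ≤ y i) ∧ (∀ j, ∑ i, y i * A i j = 0) ∧ ∑ i, y i * b i < 0) := by
  intro n
  induction n with
  | zero =>
    intro ι _ A b
    classical
    by_cases h : ∀ i, 0 ≤ b i
    · exact Or.inl ⟨0, fun i => by simpa using h i⟩
    · push_neg at h
      obtain ⟨i0, hi0⟩ := h
      refine Or.inr ⟨fun i => if i = i0 then 1 else 0, ?_, fun j => j.elim0, ?_⟩
      · intro i; dsimp only; split <;> norm_num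
      · simpa [ite_mul] using hi0
  | succ n IH =>
    intro ι _ A b
    classical
    set L := Fin.last n with hL
    let w : {i : ι // A i L = 0} ⊕ {i : ι // 0 < A i L} × {i : ι // A i L < 0} → ι → ℚ :=
      Sum.elim (fun z i => if i = z.1 then 1 else 0)
        (fun pq i => (if i = pq.1.1 then (A pq.1.1 L)⁻¹ else 0) +
          (if i = pq.2.1 then (-(A pq.2.1 L))⁻¹ else 0))
    have hw0 : ∀ k i, 0 ≤ w k i := by
      rintro (z | pq) i <;> simp only [w, Sum.elim_inl, Sum.elim_inr]
      · split <;> norm_num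
      · have h1 : (0:ℚ) ≤ (A pq.1.1 L)⁻¹ := inv_nonneg.2 pq.1.2.le
        have h2 : (0:ℚ) ≤ (-(A pq.2.1 L))⁻¹ := inv_nonneg.2 (by linarith [pq.2.2])
        apply add_nonneg
        · split
          · exact h1
          · exact le_rfl
        · split
          · exact h2
          · exact le_rfl
    have hwsum : ∀ k (v : ι → ℚ), ∑ i, w k i * v i =
        Sum.elim (fun z => v z.1)
          (fun pq => (A pq.1.1 L)⁻¹ * v pq.1.1 + (-(A pq.2.1 L))⁻¹ * v pq.2.1) k := by
      rintro (z | pq) v <;>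
        simp [w, ite_mul, add_mul, Finset.sum_add_distrib, Finset.sum_ite_eq']
    have hwlast : ∀ k, ∑ i, w k i * A i L = 0 := by
      rintro (z | pq)
      · rw [hwsum]; simp [z.2]
      · rw [hwsum]
        have hp := pq.1.2
        have hq := pq.2.2
        simp only [Sum.elim_inr]
        rw [inv_mul_cancel₀ (ne_of_gt hp)]
        rw [show (-(A pq.2.1 L))⁻¹ * A pq.2.1 L = -1 by
          rw [inv_neg, neg_mul, inv_mul_cancel₀ (ne_of_lt hq)]]
        ring
    rcases IH _ (fun k j => ∑ i, w k i * A i j.castSucc) (fun k => ∑ i, w k i * b i) with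
      ⟨x', hx'⟩ | ⟨y', hy0, hyA, hyb⟩
    · -- solvable case
      have hS : ∀ k, ∑ i, w k i * (∑ j, A i j.castSucc * x' j) ≤ ∑ i, w k i * b i := by
        intro k
        refine le_trans (le_of_eq ?_) (hx' k)
        simp_rw [Finset.mul_sum, Finset.sum_mul, mul_assoc]
        exact Finset.sum_comm
      have key : ∀ (q : {i : ι // A i L < 0}) (p : {i : ι // 0 < A i L}),
          ((∑ j, A q.1 j.castSucc * x' j) - b q.1) / (-(A q.1 L)) ≤
            (b p.1 - (∑ j, A p.1 j.castSucc * x' j)) / (A p.1 L) := by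
        intro q p
        have hp : (0:ℚ) < A p.1 L := p.2
        have hq : (0:ℚ) < -(A q.1 L) := by linarith [q.2]
        have hcon := hS (Sum.inr (p, q))
        rw [hwsum, hwsum] at hcon
        simp only [Sum.elim_inr] at hcon
        rw [div_le_div_iff₀ hq hp]
        have ha : A p.1 L ≠ 0 := ne_of_gt hp
        have hc : -(A q.1 L) ≠ 0 := ne_of_gt hq
        have h3 := mul_le_mul_of_nonneg_left hcon (mul_pos hp hq).le
        have l1 := aux_mul (A p.1 L) (-(A q.1 L)) (∑ j, A p.1 j.castSucc * x' j)
          (∑ j, A q.1 j.castSucc * x' j) ha hc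
        have l2 := aux_mul (A p.1 L) (-(A q.1 L)) (b p.1) (b q.1) ha hc
        linarith [h3, l1, l2]
      obtain ⟨t, htf, htg⟩ := exists_between_finite _ _ key
      refine Or.inl ⟨Fin.snoc x' t, fun i => ?_⟩
      rw [Fin.sum_univ_castSucc]
      simp only [Fin.snoc_castSucc, Fin.snoc_last]
      have hgoal : (∑ j, A i j.castSucc * x' j) + A i L * t ≤ b i := by
        rcases lt_trichotomy (A i L) 0 with h | h | h
        · have := htf ⟨i, h⟩
          rw [div_le_iff₀ (by linarith : (0:ℚ) < -(A i L))] at this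
          simp only at this
          linarith
        · have := hS (Sum.inl ⟨i, h⟩)
          rw [hwsum, hwsum] at this
          simp only [Sum.elim_inl] at this
          rw [h]; simpa using this
        · have := htg ⟨i, h⟩
          rw [le_div_iff₀ h] at this
          simp only at this
          linarith
      exact hgoal
    · -- certificate case
      refine Or.inr ⟨fun i => ∑ k, y' k * w k i,
        fun i => Finset.sum_nonneg fun k _ => mul_nonneg (hy0 k) (hw0 k i), ?_, ?_⟩
      · intro j
        have swap : ∑ i, (∑ k, y' k * w k i) * A i j = ∑ k, y' k * ∑ i, w k i * A i j := by
          simp_rw [Finset.sum_mul, Finset.mul_sum, mul_assoc]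
          exact Finset.sum_comm
        rw [swap]
        refine Fin.lastCases ?_ ?_ j
        · simp only [← hL, hwlast, mul_zero, Finset.sum_const_zero]
        · intro j'
          simpa using hyA j'
      · have swap : ∑ i, (∑ k, y' k * w k i) * b i = ∑ k, y' k * ∑ i, w k i * b i := by
          simp_rw [Finset.sum_mul, Finset.mul_sum, mul_assoc]
          exact Finset.sum_comm
        rw [swap]
        exact hyb

lemma exists_nat_scale {k : ℕ} (v : Fin k → ℚ) (hv : ∀ i, 0 ≤ v i) :
    ∃ (D : ℕ) (w : Fin k → ℕ), 0 < D ∧ ∀ i, (w i : ℚ) = D * v i := by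
  refine ⟨∏ i, (v i).den, fun i => ((∏ i, (v i).den) / (v i).den) * (v i).num.toNat,
    Finset.prod_pos fun i _ => (v i).pos, fun i => ?_⟩
  have hd : (v i).den ∣ ∏ i, (v i).den := Finset.dvd_prod_of_mem _ (Finset.mem_univ i)
  have hden : ((v i).den : ℚ) ≠ 0 := by exact_mod_cast (v i).pos.ne'
  have hnum : (((v i).num.toNat : ℚ)) = ((v i).num : ℚ) := by
    exact_mod_cast congrArg (Int.cast : ℤ → ℚ) (Int.toNat_of_nonneg (Rat.num_nonneg.2 (hv i)))
  push_cast [Nat.cast_div hd hden]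
  rw [hnum, div_mul_eq_mul_div, mul_div_assoc, Rat.num_div_den]

lemma swap_sum_nat {m n : ℕ} (M : Matrix (Fin m) (Fin n) ℕ) (x : Fin n → ℕ) (y : Fin m → ℕ) :
    ∑ j, (∑ i, M i j * y i) * x j = ∑ i, (∑ j, M i j * x j) * y i := by
  simp_rw [Finset.sum_mul]
  rw [Finset.sum_comm]
  exact Finset.sum_congr rfl fun i _ => Finset.sum_congr rfl fun j _ => by ring

lemma mulVec_apply'' {m n : ℕ} (M : Matrix (Fin m) (Fin n) ℕ) (v : Fin n → ℕ) (i : Fin m) :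
    M.mulVec v i = ∑ j, M i j * v j := rfl



/-- **Lemma (theorem of the alternative over ℕ).**
Let `A` and `B` be `m × n` matrices over `ℕ`. Exactly one of the following holds:
(1) for some `x ∈ ℕⁿ` with every coordinate positive, `A x ≤ B x` coordinate-wise;
(2) for some `y ∈ ℕᵐ`, `Aᵀ y ≥ Bᵀ y` coordinate-wise and `Aᵀ y ≠ Bᵀ y`. -/
theorem alternative_nat (m n : ℕ) (A B : Matrix (Fin m) (Fin n) ℕ) :
    Xor'
      (∃ x : Fin n → ℕ, (∀ j, 0 < x j) ∧ ∀ i, A.mulVec x i ≤ B.mulVec x i)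
      (∃ y : Fin m → ℕ, (∀ j, B.transpose.mulVec y j ≤ A.transpose.mulVec y j) ∧
        A.transpose.mulVec y ≠ B.transpose.mulVec y) := by
  classical
  have htr : ∀ (M : Matrix (Fin m) (Fin n) ℕ) (y : Fin m → ℕ) (j : Fin n),
      M.transpose.mulVec y j = ∑ i, M i j * y i := by
    intro M y j
    rw [mulVec_apply'']
    exact Finset.sum_congr rfl fun i _ => by rw [Matrix.transpose_apply]
  -- mutual exclusivity
  have excl : ¬ ((∃ x : Fin n → ℕ, (∀ j, 0 < x j) ∧ ∀ i, A.mulVec x i ≤ B.mulVec x i) ∧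
      (∃ y : Fin m → ℕ, (∀ j, B.transpose.mulVec y j ≤ A.transpose.mulVec y j) ∧
        A.transpose.mulVec y ≠ B.transpose.mulVec y)) := by
    rintro ⟨⟨x, hxpos, hxle⟩, ⟨y, hyle, hyne⟩⟩
    obtain ⟨j0, hj0⟩ := Function.ne_iff.1 hyne
    have hlt : ∑ i, B i j0 * y i < ∑ i, A i j0 * y i := by
      have h1 := hyle j0
      rw [htr, htr] at h1
      rw [htr, htr] at hj0
      exact lt_of_le_of_ne h1 (Ne.symm hj0)
    have big : ∑ j, (∑ i, B i j * y i) * x j < ∑ j, (∑ i, A i j * y i) * x j := by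
      refine Finset.sum_lt_sum (fun j _ => Nat.mul_le_mul_right _ ?_)
        ⟨j0, Finset.mem_univ j0, mul_lt_mul_of_pos_right hlt (hxpos j0)⟩
      have := hyle j; rwa [htr, htr] at this
    have small : ∑ i, (∑ j, A i j * x j) * y i ≤ ∑ i, (∑ j, B i j * x j) * y i := by
      refine Finset.sum_le_sum fun i _ => Nat.mul_le_mul_right _ ?_
      have := hxle i; rwa [mulVec_apply'', mulVec_apply''] at this
    have loop : ∑ i, (∑ j, A i j * x j) * y i < ∑ i, (∑ j, A i j * x j) * y i :=
      calc ∑ i, (∑ j, A i j * x j) * y i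
          ≤ ∑ i, (∑ j, B i j * x j) * y i := small
        _ = ∑ j, (∑ i, B i j * y i) * x j := (swap_sum_nat B x y).symm
        _ < ∑ j, (∑ i, A i j * y i) * x j := big
        _ = ∑ i, (∑ j, A i j * x j) * y i := swap_sum_nat A x y
    exact lt_irrefl _ loop
  -- existence
  have exist : (∃ x : Fin n → ℕ, (∀ j, 0 < x j) ∧ ∀ i, A.mulVec x i ≤ B.mulVec x i) ∨
      (∃ y : Fin m → ℕ, (∀ j, B.transpose.mulVec y j ≤ A.transpose.mulVec y j) ∧
        A.transpose.mulVec y ≠ B.transpose.mulVec y) := by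
    rcases fm_alternative n (Fin m ⊕ Fin n)
        (Sum.elim (fun i j => (A i j : ℚ) - B i j) (fun j' j => if j = j' then -1 else 0))
        (Sum.elim (fun _ => 0) (fun _ => -1)) with ⟨x, hx⟩ | ⟨y, hy0, hyA, hyc⟩
    · -- solvable: positive solution exists
      have hx1 : ∀ j', (1:ℚ) ≤ x j' := by
        intro j'
        have := hx (Sum.inr j')
        simp only [Sum.elim_inr, ite_mul, zero_mul, Finset.sum_ite_eq',
          Finset.mem_univ, if_true] at this
        linarith
      have hxA : ∀ i, ∑ j, ((A i j : ℚ) - B i j) * x j ≤ 0 := by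
        intro i
        simpa using hx (Sum.inl i)
      obtain ⟨D, wx, hD, hw⟩ := exists_nat_scale x (fun j => le_trans zero_le_one (hx1 j))
      refine Or.inl ⟨wx, fun j => ?_, fun i => ?_⟩
      · have : (0:ℚ) < wx j := by
          rw [hw j]
          have : (0:ℚ) < D := by exact_mod_cast hD
          nlinarith [hx1 j]
        exact_mod_cast this
      · rw [mulVec_apply'', mulVec_apply'', ← Nat.cast_le (α := ℚ)]
        push_cast
        simp only [hw]
        have h0 : (0:ℚ) ≤ D := Nat.cast_nonneg D
        have h1 := mul_le_mul_of_nonneg_left (hxA i) h0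
        rw [mul_zero] at h1
        have e : (D:ℚ) * ∑ j, ((A i j:ℚ) - B i j) * x j =
            (∑ j, (A i j:ℚ) * ((D:ℚ) * x j)) - ∑ j, (B i j:ℚ) * ((D:ℚ) * x j) := by
          rw [Finset.mul_sum, ← Finset.sum_sub_distrib]
          exact Finset.sum_congr rfl fun j _ => by ring
        linarith
    · -- certificate
      have hcol : ∀ j, ∑ i, y (Sum.inl i) * ((A i j : ℚ) - B i j) = y (Sum.inr j) := by
        intro j
        have := hyA j
        rw [Fintype.sum_sum_type] at this
        simp only [Sum.elim_inl, Sum.elim_inr, mul_ite, mul_neg_one, mul_zero,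
          Finset.sum_ite_eq, Finset.mem_univ, if_true] at this
        linarith
      have hsum : 0 < ∑ j', y (Sum.inr j') := by
        have := hyc
        rw [Fintype.sum_sum_type] at this
        simp only [Sum.elim_inl, Sum.elim_inr, mul_zero, mul_neg_one,
          Finset.sum_const_zero, Finset.sum_neg_distrib] at this
        linarith [this]
      obtain ⟨j0, hj0⟩ : ∃ j0, 0 < y (Sum.inr j0) := by
        by_contra hc
        push_neg at hc
        have : ∑ j', y (Sum.inr j') ≤ 0 := Finset.sum_nonpos fun j' _ => hc j'
        linarith
      obtain ⟨D, wy, hD, hw⟩ := exists_nat_scale (fun i => y (Sum.inl i)) (fun i => hy0 _)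
      have keyv : ∀ j, (∑ i, (A i j : ℚ) * wy i) - ∑ i, (B i j : ℚ) * wy i
          = (D : ℚ) * y (Sum.inr j) := by
        intro j
        rw [← Finset.sum_sub_distrib, ← hcol j, Finset.mul_sum]
        exact Finset.sum_congr rfl fun i _ => by rw [hw i]; ring
      refine Or.inr ⟨wy, fun j => ?_, ?_⟩
      · rw [htr, htr, ← Nat.cast_le (α := ℚ)]
        push_cast
        have := keyv j
        have h2 : (0:ℚ) ≤ (D:ℚ) * y (Sum.inr j) :=
          mul_nonneg (Nat.cast_nonneg D) (hy0 _)
        linarith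
      · intro heq
        have heq0 := congrFun heq j0
        rw [htr, htr] at heq0
        have hcast : (∑ i, (A i j0 : ℚ) * wy i) = ∑ i, (B i j0 : ℚ) * wy i := by
          exact_mod_cast congrArg (Nat.cast : ℕ → ℚ) heq0
        have := keyv j0
        have hDpos : (0:ℚ) < D := by exact_mod_cast hD
        nlinarith [hj0]
  rcases exist with h | h
  · exact Or.inl ⟨h, fun h2 => excl ⟨h, h2⟩⟩
  · exact Or.inr ⟨h, fun h1 => excl ⟨h1, h⟩⟩
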